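/- Let (Ω, 𝓕, μ) be a probability space with a filtration (𝓕_n)_{n ∈ ℕ}, let T ∈ ℕ, let π : ℕ → Ω → ℝ be such that π_s is integrable for every s ≤ T, and let τ : Ω → ℕ be a stopping time with respect to (𝓕_n). For each n ≤ T define the fair value V_n := E[∑_{s=n+1}^{T} π_s | 𝓕_n]. Then E[∑_{s=1}^{min(τ,T)} π_s + 1_{τ ≤ T}·V_{min(τ,T)}] = E[∑_{s=1}^{T} π_s], i.e. the expected value of the cash flows received up to the first-default time together with a risk-free close-out payment of the fair value V_τ at default (with full recovery) equals the expected value of all the cash flows of the deal. -/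

import Mathlib

open MeasureTheory Finset

/-- under a risk-free close-out at the fair value with full
recovery, the expected value of the cash flows up to the first-default time
plus the close-out payment equals the expected value of all the cash flows. -/
theorem stmt_7 {Ω : Type*} {mF : MeasurableSpace Ω} (μ : Measure Ω)
    [IsProbabilityMeasure μ] (𝓕 : Filtration ℕ mF) (T : ℕ)
    (π : ℕ → Ω → ℝ) (hπ : ∀ s ≤ T, Integrable (π s) μ)
    (τ : Ω → ℕ) (hτ : IsStoppingTime 𝓕 (fun ω => (τ ω : WithTop ℕ)))
    (V : ℕ → Ω → ℝ)
    (hV : ∀ n ≤ T, V n = μ[fun ω => ∑ s ∈ Finset.Icc (n + 1) T, π s ω | 𝓕 n]) :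
    ∫ ω, ((∑ s ∈ Finset.Icc 1 (min (τ ω) T), π s ω)
        + if τ ω ≤ T then V (min (τ ω) T) ω else 0) ∂μ
      = ∫ ω, ∑ s ∈ Finset.Icc 1 T, π s ω ∂μ := by
  -- notation
  set g : Ω → ℝ := fun ω => ∑ s ∈ Finset.Icc 1 T, π s ω with hg_def
  have hsum_int : ∀ n, Integrable (fun ω => ∑ s ∈ Finset.Icc (n + 1) T, π s ω) μ := by
    intro n
    exact integrable_finset_sum _ fun s hs => hπ s (Finset.mem_Icc.mp hs).2
  have hg_int : Integrable g μ :=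
    integrable_finset_sum _ fun s hs => hπ s (Finset.mem_Icc.mp hs).2
  set h : ℕ → Ω → ℝ := fun n =>
    Set.indicator {ω | τ ω = n} (fun ω => V n ω - ∑ s ∈ Finset.Icc (n + 1) T, π s ω)
    with hh_def
  have hmeas : ∀ n, MeasurableSet {ω | τ ω = n} := fun n =>
    (𝓕.le n) _ (by simpa using hτ.measurableSet_eq n)
  have hVint : ∀ n, n ≤ T → Integrable (V n) μ := by
    intro n hn
    rw [hV n hn]
    exact integrable_condExp
  have hdiff_int : ∀ n, n ≤ T →
      Integrable (fun ω => V n ω - ∑ s ∈ Finset.Icc (n + 1) T, π s ω) μ := by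
    intro n hn
    exact (hVint n hn).sub (hsum_int n)
  have hh_int : ∀ n ∈ Finset.range (T + 1), Integrable (h n) μ := by
    intro n hn
    exact (hdiff_int n (Nat.lt_succ_iff.mp (Finset.mem_range.mp hn))).indicator (hmeas n)
  -- pointwise decomposition
  have hpt : ∀ ω, ((∑ s ∈ Finset.Icc 1 (min (τ ω) T), π s ω)
        + if τ ω ≤ T then V (min (τ ω) T) ω else 0)
      = g ω + ∑ n ∈ Finset.range (T + 1), h n ω := by
    intro ω
    by_cases hle : τ ω ≤ T
    · have hmin : min (τ ω) T = τ ω := min_eq_left hle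
      have hsum : ∑ n ∈ Finset.range (T + 1), h n ω = h (τ ω) ω := by
        refine Finset.sum_eq_single (τ ω) ?_ ?_
        · intro n _ hne
          simp only [hh_def, Set.indicator_apply, Set.mem_setOf_eq]
          rw [if_neg (fun hc => hne hc.symm)]
        · intro hnot
          exact absurd (Finset.mem_range.mpr (Nat.lt_succ_of_le hle)) hnot
      have hτmem : h (τ ω) ω = V (τ ω) ω - ∑ s ∈ Finset.Icc (τ ω + 1) T, π s ω := by
        simp [hh_def]
      rw [hmin, if_pos hle, hsum, hτmem]
      have hsplit : (∑ s ∈ Finset.Icc 1 (τ ω), π s ω)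
          + ∑ s ∈ Finset.Icc (τ ω + 1) T, π s ω = g ω := by
        have h0 : ∀ m : ℕ, Finset.Icc 1 m = Finset.Ioc 0 m := fun m =>
          Finset.Icc_add_one_left_eq_Ioc 0 m
        have h1 : Finset.Icc (τ ω + 1) T = Finset.Ioc (τ ω) T :=
          Finset.Icc_add_one_left_eq_Ioc (τ ω) T
        rw [hg_def, h0, h0, h1]
        exact Finset.sum_Ioc_consecutive _ (Nat.zero_le _) hle
      linarith [hsplit]
    · have hmin : min (τ ω) T = T := min_eq_right (le_of_not_ge hle)
      have hsum : ∑ n ∈ Finset.range (T + 1), h n ω = 0 := by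
        refine Finset.sum_eq_zero fun n hn => ?_
        have : τ ω ≠ n := by
          intro hc
          exact hle (hc ▸ Nat.lt_succ_iff.mp (Finset.mem_range.mp hn))
        simp [hh_def, Set.indicator_apply, this]
      rw [hmin, if_neg hle, hsum, add_zero]
  -- each h n has zero integral
  have hzero : ∀ n ∈ Finset.range (T + 1), ∫ ω, h n ω ∂μ = 0 := by
    intro n hn
    have hnT : n ≤ T := Nat.lt_succ_iff.mp (Finset.mem_range.mp hn)
    have : ∫ ω, h n ω ∂μ
        = ∫ ω in {ω | τ ω = n}, (V n ω - ∑ s ∈ Finset.Icc (n + 1) T, π s ω) ∂μ := by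
      rw [hh_def]
      exact integral_indicator (hmeas n)
    rw [this, integral_sub (((hVint n hnT)).integrableOn) ((hsum_int n).integrableOn)]
    have hset : ∫ ω in {ω | τ ω = n}, V n ω ∂μ
        = ∫ ω in {ω | τ ω = n}, (∑ s ∈ Finset.Icc (n + 1) T, π s ω) ∂μ := by
      rw [hV n hnT]
      exact setIntegral_condExp (𝓕.le n) (hsum_int n) (by simpa using hτ.measurableSet_eq n)
    rw [hset, sub_self]
  calc ∫ ω, ((∑ s ∈ Finset.Icc 1 (min (τ ω) T), π s ω)
        + if τ ω ≤ T then V (min (τ ω) T) ω else 0) ∂μ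
      = ∫ ω, (g ω + ∑ n ∈ Finset.range (T + 1), h n ω) ∂μ := by
        exact integral_congr_ae (Filter.Eventually.of_forall hpt)
    _ = ∫ ω, g ω ∂μ + ∫ ω, ∑ n ∈ Finset.range (T + 1), h n ω ∂μ := by
        exact integral_add hg_int (integrable_finset_sum _ hh_int)
    _ = ∫ ω, g ω ∂μ := by
        rw [integral_finset_sum _ hh_int, Finset.sum_congr rfl hzero, Finset.sum_const_zero,
          add_zero]
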